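/- Let I and Î be nonempty open intervals of ℝ with closure(I) ⊆ Î, Î bounded. Let (b_i)_{i∈ι} be a Hilbert basis of L²(I, ℂ), and suppose for each i there is a continuously differentiable function ê_i : Î → ℂ, with ê_i and its derivative ê_i′ bounded, whose restriction to I equals b_i almost everywhere. Let f : ι → ℂ be such that the families i ↦ |f i|² and i ↦ (‖ê_i′‖_∞ · |f i|)² are summable, and let u ∈ L²(I, ℂ). Then the family i ↦ (f i · ⟨b_i, u⟩) • ê_i′ is summable in the Banach space of bounded continuous functions on Î equipped with the supremum norm. -/

import Mathlib

open MeasureTheory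

/-- Let `I = (a,b)` and `Î = (â,b̂)` be nonempty open intervals with
`closure I ⊆ Î` (`Î` bounded). Let `B` be a Hilbert basis of `L²(I, ℂ)` such that each
`B i` agrees a.e. on `I` with a function `e i` that is continuously differentiable on `Î`
with bounded derivative given by the bounded continuous function `e' i` on `Î` (and `e i`
itself bounded on `Î`). If `i ↦ |f i|²` and `i ↦ (‖e' i‖_∞ · |f i|)²` are summable and
`u ∈ L²(I, ℂ)`, then `i ↦ (f i · ⟨B i, u⟩) • e' i` is summable in the Banach space of
bounded continuous functions on `Î` with the sup norm. -/
theorem stmt_12 (a b ah bh : ℝ) (hab : a < b) (ha : ah < a) (hb : b < bh)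
    {ι : Type*}
    (B : HilbertBasis ι ℂ (Lp ℂ 2 (volume.restrict (Set.Ioo a b))))
    (e : ι → ℝ → ℂ)
    (e' : ι → BoundedContinuousFunction (Set.Ioo ah bh) ℂ)
    (hext : ∀ i : ι, ∀ᵐ x ∂(volume.restrict (Set.Ioo a b)), B i x = e i x)
    (hderiv : ∀ (i : ι) (x : ℝ) (hx : x ∈ Set.Ioo ah bh),
      HasDerivAt (e i) (e' i ⟨x, hx⟩) x)
    (hbd : ∀ i : ι, ∃ M : ℝ, ∀ x ∈ Set.Ioo ah bh, ‖e i x‖ ≤ M)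
    (f : ι → ℂ)
    (hf1 : Summable fun i : ι => ‖f i‖ ^ 2)
    (hf2 : Summable fun i : ι => (‖e' i‖ * ‖f i‖) ^ 2)
    (u : Lp ℂ 2 (volume.restrict (Set.Ioo a b))) :
    Summable fun i : ι => (f i * (inner ℂ (B i) u : ℂ)) • e' i := by
  have hbes : Summable fun i : ι => ‖(inner ℂ (B i) u : ℂ)‖ ^ 2 :=
    B.orthonormal.inner_products_summable u
  have hsum : Summable fun i : ι =>
      ((‖e' i‖ * ‖f i‖) ^ 2 + ‖(inner ℂ (B i) u : ℂ)‖ ^ 2) / 2 :=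
    (hf2.add hbes).div_const 2
  refine Summable.of_norm (Summable.of_nonneg_of_le (fun i => norm_nonneg _)
    (fun i => ?_) hsum)
  rw [norm_smul, norm_mul]
  calc ‖f i‖ * ‖(inner ℂ (B i) u : ℂ)‖ * ‖e' i‖
      = (‖e' i‖ * ‖f i‖) * ‖(inner ℂ (B i) u : ℂ)‖ := by ring
    _ ≤ ((‖e' i‖ * ‖f i‖) ^ 2 + ‖(inner ℂ (B i) u : ℂ)‖ ^ 2) / 2 := by
        nlinarith [sq_nonneg (‖e' i‖ * ‖f i‖ - ‖(inner ℂ (B i) u : ℂ)‖)]
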